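/- Let n ≥ 1 and let p be a map assigning to each x ∈ {0,1}^n a probability mass function p(· | x) on {0,1}^n. Then p is a 1-ary unbiased distribution family if and only if there exists a probability mass function r on {0, 1, …, n} such that for all x, y ∈ {0,1}^n, p(y | x) = r(H(x, y)) / C(n, H(x, y)), where H denotes the Hamming distance and C(n, d) the binomial coefficient; equivalently, sampling from p(· | x) amounts to drawing d ∼ r and then flipping the entries of a uniformly random set of d distinct coordinates of x. -/

import Mathlib

open scoped ENNReal

/-- Bit strings of length `n`. -/
abbrev Point (n : ℕ) := Fin n → Bool

/-- Pointwise XOR (the `⊕`-shift) of bit strings. -/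
def pxor {n : ℕ} (x z : Point n) : Point n := fun i => xor (x i) (z i)

/-- The Hamming distance of two bit strings. -/
def hamming {n : ℕ} (x y : Point n) : ℕ :=
  (Finset.univ.filter fun i => x i ≠ y i).card

namespace Stmt15Aux

lemma hamming_le {n : ℕ} (x y : Point n) : hamming x y ≤ n := by
  simpa [hamming] using (Finset.card_filter_le Finset.univ fun i => x i ≠ y i)

lemma hamming_pxor {n : ℕ} (x y z : Point n) :
    hamming (pxor x z) (pxor y z) = hamming x y := by
  unfold hamming pxor
  congr 1
  apply Finset.filter_congr
  intro i _
  cases x i <;> cases y i <;> cases z i <;> simp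

lemma hamming_comp {n : ℕ} (x y : Point n) (σ : Equiv.Perm (Fin n)) :
    hamming (x ∘ σ) (y ∘ σ) = hamming x y := by
  unfold hamming
  apply Finset.card_bij (fun i _ => σ i)
  · intro a ha; simp only [Finset.mem_filter, Finset.mem_univ, true_and,
      Function.comp_apply] at ha ⊢; exact ha
  · intro a _ b _ h; exact σ.injective h
  · intro b hb
    refine ⟨σ.symm b, ?_, by simp⟩
    simp only [Finset.mem_filter, Finset.mem_univ, true_and, Function.comp_apply,
      Equiv.apply_symm_apply] at hb ⊢
    exact hb

/-- The all-zero string. -/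
def zero (n : ℕ) : Point n := fun _ => false

lemma pxor_self {n : ℕ} (x : Point n) : pxor x x = zero n := by
  funext i; simp [pxor, zero]

lemma hamming_zero {n : ℕ} (y : Point n) :
    hamming (zero n) y = (Finset.univ.filter fun i => y i = true).card := by
  unfold hamming zero
  congr 1
  apply Finset.filter_congr
  intro i _
  cases y i <;> simp

/-- two points of the same weight are related by a permutation -/
lemma exists_perm {n : ℕ} (w v : Point n) (h : hamming (zero n) w = hamming (zero n) v) :
    ∃ σ : Equiv.Perm (Fin n), w ∘ σ = v := by
  classical
  rw [hamming_zero, hamming_zero] at h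
  set A : Finset (Fin n) := Finset.univ.filter fun i => w i = true with hA
  set B : Finset (Fin n) := Finset.univ.filter fun i => v i = true with hB
  have hcard : Fintype.card {i // i ∈ B} = Fintype.card {i // i ∈ A} := by
    simpa [Fintype.card_coe] using h.symm
  let e : {i // i ∈ B} ≃ {i // i ∈ A} := Fintype.equivOfCardEq hcard
  refine ⟨e.extendSubtype, ?_⟩
  funext i
  by_cases hi : i ∈ B
  · have h1 : (e.extendSubtype i : Fin n) ∈ A := e.extendSubtype_mem i hi
    have h2 : v i = true := by simpa [hB] using hi
    have h3 : w (e.extendSubtype i) = true := by simpa [hA] using h1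
    simp [Function.comp, h2, h3]
  · have h1 : (e.extendSubtype i : Fin n) ∉ A := e.extendSubtype_not_mem i hi
    have h2 : v i = false := by simpa [hB] using hi
    have h3 : w (e.extendSubtype i) = false := by simpa [hA] using h1
    simp [Function.comp, h2, h3]

lemma card_weight (n d : ℕ) :
    (Finset.univ.filter fun y : Point n => hamming (zero n) y = d).card = n.choose d := by
  classical
  have key : (Finset.univ.filter fun y : Point n => hamming (zero n) y = d).card
      = (Finset.powersetCard d (Finset.univ : Finset (Fin n))).card := by
    apply Finset.card_nbij' (fun y => Finset.univ.filter fun i => y i = true)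
      (fun s i => (decide (i ∈ s) : Bool))
    · intro y hy
      simp only [Finset.mem_coe, Finset.mem_filter, Finset.mem_univ, true_and, hamming_zero] at hy
      simp [Finset.mem_powersetCard, hy]
    · intro s hs
      simp only [Finset.mem_coe, Finset.mem_powersetCard] at hs
      simp only [Finset.mem_coe, Finset.mem_filter, Finset.mem_univ, true_and, hamming_zero]
      rw [← hs.2]
      congr 1
      ext i
      simp
    · intro y _
      funext i
      simp
    · intro s _
      ext i
      simp
  rw [key, Finset.card_powersetCard, Finset.card_univ, Fintype.card_fin]

lemma div_congr {n : ℕ} (r : PMF (Fin (n + 1))) {h1 h2 : ℕ} (e : h1 = h2)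
    (p1 : h1 < n + 1) (p2 : h2 < n + 1) :
    r ⟨h1, p1⟩ / (Nat.choose n h1 : ℝ≥0∞) = r ⟨h2, p2⟩ / (Nat.choose n h2 : ℝ≥0∞) := by
  subst e; rfl

end Stmt15Aux

open Stmt15Aux

/-- Characterization of unary unbiased variation operators: `p` is a 1-ary
unbiased distribution family iff there is a distribution `r` on `{0,…,n}` such
that sampling from `p(·|x)` amounts to drawing `d ∼ r` and flipping a uniformly
random set of `d` distinct coordinates of `x`; i.e.
`p(y|x) = r(H(x,y))/C(n,H(x,y))`. -/
theorem stmt15 (n : ℕ) (hn : 1 ≤ n) (p : Point n → PMF (Point n)) :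
    ((∀ (x y z : Point n), p x y = p (pxor x z) (pxor y z)) ∧
     (∀ (x y : Point n) (σ : Equiv.Perm (Fin n)), p x y = p (x ∘ σ) (y ∘ σ))) ↔
    ∃ r : PMF (Fin (n + 1)), ∀ x y : Point n,
      p x y = r ⟨hamming x y,
          Nat.lt_succ_of_le (le_trans (Finset.card_filter_le _ _) (by simp))⟩ /
        (Nat.choose n (hamming x y) : ℝ≥0∞) := by
  classical
  constructor
  · rintro ⟨hx, hp⟩
    set x0 : Point n := zero n with hx0
    have key : ∀ x y : Point n, p x y = p x0 (pxor y x) := by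
      intro x y
      have := hx x y x
      rwa [pxor_self] at this
    have fiber_eq : ∀ w v : Point n, hamming x0 w = hamming x0 v → p x0 w = p x0 v := by
      intro w v h
      obtain ⟨σ, hσ⟩ := exists_perm w v h
      have h2 := hp x0 w σ
      have h3 : x0 ∘ σ = x0 := rfl
      rw [h3, hσ] at h2
      exact h2
    set r0 : Fin (n + 1) → ℝ≥0∞ :=
      fun d => ∑ y ∈ Finset.univ.filter (fun y : Point n => hamming x0 y = d.val), p x0 y
      with hr0
    have hsum : ∑ d, r0 d = 1 := by
      have hfib := Finset.sum_fiberwise (Finset.univ : Finset (Point n))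
        (fun y : Point n => (⟨hamming x0 y, Nat.lt_succ_of_le (hamming_le _ _)⟩ : Fin (n + 1)))
        (fun y => p x0 y)
      have hone : ∑ y : Point n, p x0 y = 1 := by
        have := (p x0).tsum_coe
        rwa [tsum_fintype] at this
      rw [← hone, ← hfib]
      apply Finset.sum_congr rfl
      intro d _
      apply Finset.sum_congr _ (fun _ _ => rfl)
      apply Finset.filter_congr
      intro y _
      simp [Fin.ext_iff]
    refine ⟨PMF.ofFintype r0 hsum, ?_⟩
    intro x y
    set h := hamming x y with hh
    set w := pxor y x with hw
    have hwh : hamming x0 w = h := by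
      have := hamming_pxor x y x
      rwa [pxor_self] at this
    have hr : r0 ⟨h, Nat.lt_succ_of_le (hamming_le x y)⟩ = (n.choose h : ℝ≥0∞) * p x0 w := by
      show (∑ y ∈ Finset.univ.filter (fun y : Point n => hamming x0 y = h), p x0 y) = _
      have hconst : ∀ v ∈ Finset.univ.filter (fun v : Point n => hamming x0 v = h),
          p x0 v = p x0 w := by
        intro v hv
        simp only [Finset.mem_filter, Finset.mem_univ, true_and] at hv
        exact fiber_eq v w (hv.trans hwh.symm)
      rw [Finset.sum_congr rfl hconst, Finset.sum_const, card_weight]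
      simp [nsmul_eq_mul]
    have hchoose0 : (n.choose h : ℝ≥0∞) ≠ 0 := by
      simpa using (Nat.choose_pos (hamming_le x y)).ne'
    have hchooseT : (n.choose h : ℝ≥0∞) ≠ ⊤ := ENNReal.natCast_ne_top _
    rw [key x y, ← hw]
    rw [PMF.ofFintype_apply]
    exact (ENNReal.eq_div_iff hchoose0 hchooseT).mpr hr.symm
  · rintro ⟨r, hr⟩
    constructor
    · intro x y z
      rw [hr x y, hr (pxor x z) (pxor y z)]
      exact (div_congr r (hamming_pxor x y z) _ _).symm
    · intro x y σ
      rw [hr x y, hr (x ∘ σ) (y ∘ σ)]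
      exact (div_congr r (hamming_comp x y σ) _ _).symm
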